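/- Let θ be an orthomorphism of F_q with θ(0) = 0, θ(b) = c and θ(c) = c - b for some distinct nonzero b, c ∈ F_q. Then the map φ defined by φ(x) = θ(x) for x ∉ {0, b, c}, φ(0) = c - b, φ(c) = c, φ(b) = 0, is an orthomorphism of F_q with H(θ, φ) = 3. -/
import Mathlib


def IsOrthomorphism {F : Type*} [Field F] (θ : F → F) : Prop :=
  Function.Bijective θ ∧ Function.Bijective fun x => θ x - x

/-- Modifying an orthomorphism with `θ 0 = 0`, `θ b = c`, `θ c = c - b` on the three
points `0, b, c` yields another orthomorphism at Hamming distance 3. -/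
theorem orth_modify {F : Type*} [Field F] [Fintype F]
    (θ φ : F → F) (b c : F) (hb : b ≠ 0) (hc : c ≠ 0) (hbc : b ≠ c)
    (hθ : IsOrthomorphism θ) (h0 : θ 0 = 0) (hθb : θ b = c) (hθc : θ c = c - b)
    (hφ : ∀ x : F, x ∉ ({0, b, c} : Set F) → φ x = θ x)
    (hφ0 : φ 0 = c - b) (hφc : φ c = c) (hφb : φ b = 0) :
    IsOrthomorphism φ ∧ {a : F | θ a ≠ φ a}.ncard = 3 := by
  classical
  obtain ⟨hθ1, hθ2⟩ := hθ
  have hinj := hθ1.injective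
  have hinj2 := hθ2.injective
  have hcb0 : c - b ≠ 0 := sub_ne_zero.mpr (Ne.symm hbc)
  have hcbc : c - b ≠ c := fun h => hb (by linear_combination -h)
  have hnb0 : -b ≠ 0 := neg_ne_zero.mpr hb
  have hnbcb : -b ≠ c - b := fun h => hc (by linear_combination -h)
  -- φ = f ∘ θ
  have hφeq : φ = (Equiv.swap 0 c) ∘ (Equiv.swap 0 (c - b)) ∘ θ := by
    funext x
    by_cases hx0 : x = 0
    · subst hx0
      simp only [Function.comp_apply, h0, hφ0, Equiv.swap_apply_left]
      rw [Equiv.swap_apply_of_ne_of_ne hcb0 hcbc]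
    by_cases hxb : x = b
    · subst hxb
      simp only [Function.comp_apply, hθb, hφb]
      rw [Equiv.swap_apply_of_ne_of_ne hc (Ne.symm hcbc), Equiv.swap_apply_right]
    by_cases hxc : x = c
    · subst hxc
      simp only [Function.comp_apply, hθc, hφc]
      rw [Equiv.swap_apply_right, Equiv.swap_apply_left]
    · have hxmem : x ∉ ({0, b, c} : Set F) := by
        simp [hx0, hxb, hxc]
      have h1 : θ x ≠ 0 := fun h => hx0 (hinj (h.trans h0.symm))
      have h2 : θ x ≠ c - b := fun h => hxc (hinj (h.trans hθc.symm))
      have h3 : θ x ≠ c := fun h => hxb (hinj (h.trans hθb.symm))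
      simp only [Function.comp_apply]
      rw [hφ x hxmem, Equiv.swap_apply_of_ne_of_ne h1 h2,
        Equiv.swap_apply_of_ne_of_ne h1 h3]
  have hbij1 : Function.Bijective φ := by
    rw [hφeq]
    exact (Equiv.swap 0 c).bijective.comp ((Equiv.swap 0 (c - b)).bijective.comp hθ1)
  -- difference map
  have hd0 : θ 0 - 0 = 0 := by rw [h0, sub_zero]
  have hdb : θ b - b = c - b := by rw [hθb]
  have hdc : θ c - c = -b := by rw [hθc]; ring
  have hφdeq : (fun x => φ x - x)
      = (Equiv.swap 0 (-b)) ∘ (Equiv.swap 0 (c - b)) ∘ (fun x => θ x - x) := by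
    funext x
    by_cases hx0 : x = 0
    · subst hx0
      simp only [Function.comp_apply, hd0, hφ0, sub_zero, Equiv.swap_apply_left]
      rw [Equiv.swap_apply_of_ne_of_ne hcb0 (Ne.symm hnbcb)]
    by_cases hxb : x = b
    · subst hxb
      simp only [Function.comp_apply, hdb, hφb, Equiv.swap_apply_right]
      rw [Equiv.swap_apply_left]
      ring
    by_cases hxc : x = c
    · subst hxc
      simp only [Function.comp_apply, hdc, hφc, sub_self]
      rw [Equiv.swap_apply_of_ne_of_ne hnb0 hnbcb, Equiv.swap_apply_right]
    · have hxmem : x ∉ ({0, b, c} : Set F) := by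
        simp [hx0, hxb, hxc]
      have h1 : θ x - x ≠ 0 := fun h => hx0 (hinj2 (h.trans hd0.symm))
      have h2 : θ x - x ≠ c - b := fun h => hxb (hinj2 (h.trans hdb.symm))
      have h3 : θ x - x ≠ -b := fun h => hxc (hinj2 (h.trans hdc.symm))
      simp only [Function.comp_apply]
      rw [hφ x hxmem, Equiv.swap_apply_of_ne_of_ne h1 h2,
        Equiv.swap_apply_of_ne_of_ne h1 h3]
  have hbij2 : Function.Bijective fun x => φ x - x := by
    rw [hφdeq]
    exact (Equiv.swap 0 (-b)).bijective.comp ((Equiv.swap 0 (c - b)).bijective.comp hθ2)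
  refine ⟨⟨hbij1, hbij2⟩, ?_⟩
  have hset : {a : F | θ a ≠ φ a} = {0, b, c} := by
    ext a
    simp only [Set.mem_setOf_eq, Set.mem_insert_iff, Set.mem_singleton_iff]
    constructor
    · intro h
      by_contra hcon
      push_neg at hcon
      exact h (hφ a (by simp [hcon.1, hcon.2.1, hcon.2.2])).symm
    · rintro (rfl | rfl | rfl)
      · rw [h0, hφ0]; exact fun h => hcb0 h.symm
      · rw [hθb, hφb]; exact hc
      · rw [hθc, hφc]; exact hcbc
  rw [hset]
  rw [Set.ncard_insert_of_notMem (by simp [Ne.symm hb, Ne.symm hc]),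
    Set.ncard_insert_of_notMem (by simp [hbc]), Set.ncard_singleton]
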